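/- Let ρ: g → so(V) be an indecomposable representation of a real solvable Lie algebra on a Lorentzian vector space V with dim V = 2 and V not equal to its invariant subspace V₀. Then there exists a nonzero linear functional λ on g, vanishing on [g,g], and a basis (e, ē) of V with ⟨e,e⟩ = ⟨ē,ē⟩ = 0, ⟨e,ē⟩ = 1, such that ρ(u)e = λ(u)e and ρ(u)ē = −λ(u)ē for all u ∈ g. -/

import Mathlib

attribute [local instance 100] LieRing.ofAssociativeRing

/-- An indecomposable representation of a real solvable Lie algebra by
skew-symmetric endomorphisms on a 2-dimensional Lorentzian space (signature (1,1)),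
with `V ≠ V₀`, admits a nonzero closed functional `λ` and a basis of isotropic vectors
`e, ē` with `⟨e,ē⟩ = 1` such that `ρ(u)e = λ(u)e` and `ρ(u)ē = −λ(u)ē`. -/
theorem indecomposable_lorentzian_rep_dim_two
    (g : Type*) [LieRing g] [LieAlgebra ℝ g] [FiniteDimensional ℝ g]
    [LieAlgebra.IsSolvable g]
    (V : Type*) [AddCommGroup V] [Module ℝ V]
    (B : LinearMap.BilinForm ℝ V) (hBsymm : ∀ x y, B x y = B y x)
    (b : Module.Basis (Fin 2) ℝ V)
    (hb00 : B (b 0) (b 0) = -1) (hb11 : B (b 1) (b 1) = 1) (hb01 : B (b 0) (b 1) = 0)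
    (ρ : g →ₗ⁅ℝ⁆ Module.End ℝ V)
    (hskew : ∀ (u : g) (x y : V), B (ρ u x) y = -B x (ρ u y))
    (hind : ∀ W : Submodule ℝ V, (∀ (u : g), ∀ x ∈ W, ρ u x ∈ W) →
      (∀ x ∈ W, (∀ y ∈ W, B x y = 0) → x = 0) → W = ⊥ ∨ W = ⊤)
    (hV0 : (⨅ u : g, LinearMap.ker (ρ u)) ≠ ⊤) :
    ∃ l : g →ₗ[ℝ] ℝ, l ≠ 0 ∧ (∀ x y : g, l ⁅x, y⁆ = 0) ∧
      ∃ e ebar : V, B e e = 0 ∧ B ebar ebar = 0 ∧ B e ebar = 1 ∧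
        Submodule.span ℝ {e, ebar} = ⊤ ∧
        (∀ u : g, ρ u e = l u • e ∧ ρ u ebar = -(l u) • ebar) := by
  have hb10 : B (b 1) (b 0) = 0 := by rw [hBsymm]; exact hb01
  set e : V := b 0 + b 1 with he
  set eb : V := (2:ℝ)⁻¹ • (b 1 - b 0) with heb
  have hBee : B e e = 0 := by
    simp [he, map_add, map_sub, LinearMap.add_apply, hb00, hb11, hb01, hb10]
  have hBebeb : B eb eb = 0 := by
    simp [heb, map_smul, map_sub, LinearMap.smul_apply, LinearMap.sub_apply,
      hb00, hb11, hb01, hb10]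
  have hBeeb : B e eb = 1 := by
    simp [he, heb, map_add, map_smul, map_sub, LinearMap.add_apply,
      hb00, hb11, hb01, hb10]
    norm_num
  have hBebe : B eb e = 1 := by rw [hBsymm]; exact hBeeb
  -- coordinate formula
  set c : V →ₗ[ℝ] V := (B.flip eb).smulRight e + (B.flip e).smulRight eb with hc
  have hce : ∀ i, (LinearMap.id : V →ₗ[ℝ] V) (b i) = c (b i) := by
    intro i
    fin_cases i <;>
      simp [hc, he, heb, map_add, map_smul, map_sub, LinearMap.add_apply,
        LinearMap.smul_apply, LinearMap.sub_apply, LinearMap.flip_apply,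
        hb00, hb11, hb01, hb10] <;> module
  have hkey : ∀ x : V, x = B x eb • e + B x e • eb := by
    intro x
    have := LinearMap.congr_fun (b.ext hce) x
    simpa [hc, LinearMap.flip_apply] using this
  set l : g →ₗ[ℝ] ℝ := (B.flip eb).comp ((LinearMap.applyₗ e).comp ρ.toLinearMap)
    with hl
  have hlu : ∀ u : g, l u = B (ρ u e) eb := fun u => rfl
  -- skewness kills diagonal entries
  have hde : ∀ (u : g) (x : V), B (ρ u x) x = 0 := by
    intro u x
    have h := hskew u x x
    rw [hBsymm x (ρ u x)] at h
    linarith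
  have he1 : ∀ u : g, ρ u e = l u • e := by
    intro u
    have := hkey (ρ u e)
    rw [hde u e, zero_smul, add_zero] at this
    rw [this, hlu]
  have he2 : ∀ u : g, ρ u eb = -(l u) • eb := by
    intro u
    have h := hkey (ρ u eb)
    rw [hde u eb, zero_smul, zero_add] at h
    have h2 : B (ρ u eb) e = -(l u) := by
      rw [hskew u eb e, hBsymm eb (ρ u e), hlu]
    rw [h, h2]
  refine ⟨l, ?_, ?_, e, eb, hBee, hBebeb, hBeeb, ?_, fun u => ⟨he1 u, he2 u⟩⟩
  · -- l ≠ 0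
    intro h0
    apply hV0
    rw [eq_top_iff]
    intro x _
    simp only [Submodule.mem_iInf, LinearMap.mem_ker]
    intro u
    conv_lhs => rw [hkey x]
    simp only [map_add, map_smul, he1 u, he2 u, h0]
    simp
  · -- closed
    intro x y
    have hbr : ρ ⁅x, y⁆ e = 0 := by
      have : ρ ⁅x, y⁆ = ρ x * ρ y - ρ y * ρ x := by
        rw [LieHom.map_lie]; rfl
      rw [this]
      simp only [LinearMap.sub_apply, Module.End.mul_apply]
      simp only [he1, map_smul, smul_smul]
      rw [mul_comm, sub_self]
    rw [hlu, hbr, map_zero, LinearMap.zero_apply]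
  · -- span
    rw [eq_top_iff, ← b.span_eq]
    apply Submodule.span_le.2
    rintro x ⟨i, rfl⟩
    have hee : e ∈ Submodule.span ℝ ({e, eb} : Set V) :=
      Submodule.subset_span (by simp)
    have heeb : eb ∈ Submodule.span ℝ ({e, eb} : Set V) :=
      Submodule.subset_span (by simp)
    have h0m : b 0 ∈ Submodule.span ℝ ({e, eb} : Set V) := by
      have hb0 : b 0 = (2:ℝ)⁻¹ • e - eb := by rw [he, heb]; module
      rw [hb0]
      exact Submodule.sub_mem _ (Submodule.smul_mem _ _ hee) heeb
    have h1m : b 1 ∈ Submodule.span ℝ ({e, eb} : Set V) := by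
      have hb1 : b 1 = (2:ℝ)⁻¹ • e + eb := by rw [he, heb]; module
      rw [hb1]
      exact Submodule.add_mem _ (Submodule.smul_mem _ _ hee) heeb
    fin_cases i
    · exact h0m
    · exact h1m
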